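/- Let (α_n) be a sequence of complex numbers with |α_n| < 1, liminf |α_n| > 0, and suppose that for every ℓ ≥ 1 the limit c_ℓ = lim_{n→∞} α_n·conj(α_{n−ℓ}) exists with c_1 = a²λ for some a ∈ (0,1] and |λ| = 1. Then |α_n| → a and α_{n+1}/α_n → λ as n → ∞, and consequently c_ℓ = a²λ^ℓ for all ℓ ≥ 1. -/

import Mathlib

open Filter

/-- If `‖α_n‖ < 1`, `liminf ‖α_n‖ > 0`, and for each `ℓ ≥ 1` the limit
`c_ℓ = lim_n α_n conj(α_{n-ℓ})` exists with `c_1 = a²λ`, `a ∈ (0,1]`, `|λ| = 1`,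
then `‖α_n‖ → a`, `α_{n+1}/α_n → λ`, and `c_ℓ = a²λ^ℓ` for all `ℓ ≥ 1`. -/
theorem mate_nevai_structure (α : ℕ → ℂ) (hα : ∀ n, ‖α n‖ < 1)
    (hinf : 0 < Filter.atTop.liminf fun n => ‖α n‖)
    (c : ℕ → ℂ)
    (hc : ∀ ℓ : ℕ, 1 ≤ ℓ →
      Tendsto (fun n => α n * (starRingEnd ℂ) (α (n - ℓ))) atTop (nhds (c ℓ)))
    (a : ℝ) (ha : a ∈ Set.Ioc (0 : ℝ) 1) (lam : ℂ) (hlam : ‖lam‖ = 1)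
    (hc1 : c 1 = (a : ℂ) ^ 2 * lam) :
    Tendsto (fun n => ‖α n‖) atTop (nhds a)
    ∧ Tendsto (fun n => α (n + 1) / α n) atTop (nhds lam)
    ∧ ∀ ℓ : ℕ, 1 ≤ ℓ → c ℓ = (a : ℂ) ^ 2 * lam ^ ℓ := by
  obtain ⟨ha0, ha1⟩ := ha
  -- shifted first correlation
  have hg : Tendsto (fun n => α (n + 1) * (starRingEnd ℂ) (α n)) atTop (nhds (c 1)) := by
    have := (hc 1 le_rfl).comp (tendsto_add_atTop_nat 1)
    simpa [Function.comp_def] using this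
  -- shifted second correlation
  have h2 : Tendsto (fun n => α (n + 1) * (starRingEnd ℂ) (α (n - 1))) atTop (nhds (c 2)) := by
    have := (hc 2 one_le_two).comp (tendsto_add_atTop_nat 1)
    have heq : (fun n : ℕ => α (n + 1) * (starRingEnd ℂ) (α (n + 1 - 2)))
        = fun n => α (n + 1) * (starRingEnd ℂ) (α (n - 1)) := by
      funext n; rw [show n + 1 - 2 = n - 1 from by omega]
    simpa [Function.comp_def, heq] using this
  -- product identity
  have hprodeq : (fun n => (α (n + 1) * (starRingEnd ℂ) (α n)) *
      (α n * (starRingEnd ℂ) (α (n - 1))))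
      = fun n => ((Complex.normSq (α n) : ℂ)) *
        (α (n + 1) * (starRingEnd ℂ) (α (n - 1))) := by
    funext n
    have : α n * (starRingEnd ℂ) (α n) = (Complex.normSq (α n) : ℂ) := Complex.mul_conj _
    rw [← this]; ring
  have hprod : Tendsto (fun n => ((Complex.normSq (α n) : ℂ)) *
      (α (n + 1) * (starRingEnd ℂ) (α (n - 1)))) atTop (nhds (c 1 * c 1)) := by
    rw [← hprodeq]
    exact hg.mul (hc 1 le_rfl)
  -- norm of c 1
  have hnc1 : ‖c 1‖ = a ^ 2 := by
    rw [hc1, norm_mul, hlam, mul_one, ← Complex.ofReal_pow,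
      Complex.norm_real, Real.norm_eq_abs, abs_of_pos (pow_pos ha0 2)]
  -- c 2 ≠ 0
  have hc2ne : c 2 ≠ 0 := by
    have hb : Tendsto (fun n => ‖((Complex.normSq (α n) : ℂ)) *
        (α (n + 1) * (starRingEnd ℂ) (α (n - 1)))‖) atTop (nhds (‖c 1 * c 1‖)) :=
      hprod.norm
    have hb2 : Tendsto (fun n => ‖α (n + 1) * (starRingEnd ℂ) (α (n - 1))‖) atTop
        (nhds ‖c 2‖) := h2.norm
    have hle : ‖c 1 * c 1‖ ≤ ‖c 2‖ := by
      refine le_of_tendsto_of_tendsto hb hb2 ?_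
      filter_upwards with n
      rw [norm_mul]
      have h1 : ‖((Complex.normSq (α n) : ℂ))‖ ≤ 1 := by
        rw [Complex.norm_real, Real.norm_eq_abs, abs_of_nonneg (Complex.normSq_nonneg _)]
        have := hα n
        have : ‖α n‖ ^ 2 ≤ 1 := by nlinarith [norm_nonneg (α n)]
        simpa [← Complex.sq_norm] using this
      calc ‖((Complex.normSq (α n) : ℂ))‖ * ‖α (n + 1) * (starRingEnd ℂ) (α (n - 1))‖
          ≤ 1 * ‖α (n + 1) * (starRingEnd ℂ) (α (n - 1))‖ := by
            exact mul_le_mul_of_nonneg_right h1 (norm_nonneg _)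
        _ = _ := one_mul _
    intro h
    rw [h, norm_zero] at hle
    have : (0:ℝ) < ‖c 1 * c 1‖ := by
      rw [norm_mul, hnc1]
      positivity
    linarith
  have hc1ne : c 1 ≠ 0 := by
    intro h
    rw [h, norm_zero] at hnc1
    nlinarith
  -- eventually the second correlation is nonzero
  have hev2 : ∀ᶠ n in atTop, α (n + 1) * (starRingEnd ℂ) (α (n - 1)) ≠ 0 :=
    h2.eventually_ne hc2ne
  -- normSq tends to c1²/c2 (as complex)
  have hnsC : Tendsto (fun n => ((Complex.normSq (α n) : ℂ))) atTop
      (nhds (c 1 * c 1 / c 2)) := by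
    have hdiv : Tendsto (fun n => (((Complex.normSq (α n) : ℂ)) *
        (α (n + 1) * (starRingEnd ℂ) (α (n - 1)))) /
        (α (n + 1) * (starRingEnd ℂ) (α (n - 1)))) atTop (nhds (c 1 * c 1 / c 2)) :=
      hprod.div h2 hc2ne
    refine hdiv.congr' ?_
    filter_upwards [hev2] with n hn
    rw [mul_div_assoc, div_self hn, mul_one]
  -- the real limit t
  set t : ℝ := (c 1 * c 1 / c 2).re with ht
  have hnsR : Tendsto (fun n => Complex.normSq (α n)) atTop (nhds t) := by
    have := (Complex.continuous_re.tendsto _).comp hnsC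
    simpa [Function.comp_def] using this
  have htC : (t : ℂ) = c 1 * c 1 / c 2 := by
    have him : Tendsto (fun n => ((Complex.normSq (α n) : ℂ)).im) atTop
        (nhds ((c 1 * c 1 / c 2).im)) := (Complex.continuous_im.tendsto _).comp hnsC
    have him0 : Tendsto (fun n => ((Complex.normSq (α n) : ℂ)).im) atTop (nhds 0) := by
      simpa using tendsto_const_nhds (α := ℝ) (x := (0:ℝ)) (f := atTop (α := ℕ))
    have : (c 1 * c 1 / c 2).im = 0 := tendsto_nhds_unique him him0
    exact Complex.ext (by simp [ht]) (by simp [this])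
  -- t > 0 from the liminf hypothesis
  have htpos : 0 < t := by
    set L := Filter.atTop.liminf fun n => ‖α n‖ with hL
    have hbdd : IsBoundedUnder (· ≤ ·) atTop fun n => ‖α n‖ :=
      isBoundedUnder_of ⟨1, fun n => (hα n).le⟩
    have hbdd' : IsBoundedUnder (· ≥ ·) atTop fun n => ‖α n‖ :=
      isBoundedUnder_of ⟨0, fun n => norm_nonneg _⟩
    have hev : ∀ᶠ n in atTop, L / 2 < ‖α n‖ :=
      eventually_lt_of_lt_liminf (by linarith [half_lt_self hinf]) hbdd'
    have : (L / 2) ^ 2 ≤ t := by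
      refine ge_of_tendsto hnsR ?_
      filter_upwards [hev] with n hn
      have h0 : 0 ≤ L / 2 := by positivity
      have : (L / 2) ^ 2 ≤ ‖α n‖ ^ 2 := by nlinarith
      calc (L / 2) ^ 2 ≤ ‖α n‖ ^ 2 := this
        _ = Complex.normSq (α n) := by
          rw [Complex.sq_norm]
    have : 0 < (L / 2) ^ 2 := by positivity
    linarith
  have htne : (t : ℂ) ≠ 0 := by exact_mod_cast ne_of_gt htpos
  -- eventually α n ≠ 0
  have hevne : ∀ᶠ n in atTop, α n ≠ 0 := by
    have := hnsR.eventually_ne (ne_of_gt htpos)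
    filter_upwards [this] with n hn h0
    exact hn (by simp [h0])
  -- norm tends to sqrt t
  have hnorm : Tendsto (fun n => ‖α n‖) atTop (nhds (Real.sqrt t)) := by
    have := (Real.continuous_sqrt.tendsto _).comp hnsR
    refine this.congr ?_
    intro n
    simp [Function.comp, Complex.norm_def]
  -- ratio tends to μ := c1 / t
  have hratio : Tendsto (fun n => α (n + 1) / α n) atTop (nhds (c 1 / (t : ℂ))) := by
    have hdiv : Tendsto (fun n => (α (n + 1) * (starRingEnd ℂ) (α n)) /
        ((Complex.normSq (α n) : ℂ))) atTop (nhds (c 1 / (c 1 * c 1 / c 2))) := by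
      have := hg.div hnsC (by rw [← htC]; exact htne)
      exact this
    rw [← htC] at hdiv
    refine hdiv.congr' ?_
    filter_upwards [hevne] with n hn
    have hcn : (starRingEnd ℂ) (α n) ≠ 0 := by simpa using hn
    rw [← Complex.mul_conj]
    rw [mul_div_mul_right _ _ hcn]
  -- norm of ratio tends to 1
  have hsqrtpos : 0 < Real.sqrt t := Real.sqrt_pos.mpr htpos
  have hnormratio1 : Tendsto (fun n => ‖α (n + 1) / α n‖) atTop (nhds 1) := by
    have hn1 : Tendsto (fun n => ‖α (n + 1)‖) atTop (nhds (Real.sqrt t)) := by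
      have := hnorm.comp (tendsto_add_atTop_nat 1)
      simpa [Function.comp_def] using this
    have := hn1.div hnorm (ne_of_gt hsqrtpos)
    simpa [norm_div, div_self (ne_of_gt hsqrtpos), Pi.div_def] using this
  have hmu1 : ‖c 1 / (t : ℂ)‖ = 1 :=
    tendsto_nhds_unique hratio.norm hnormratio1
  -- t = a²
  have hta : t = a ^ 2 := by
    have : ‖c 1 / (t : ℂ)‖ = a ^ 2 / t := by
      rw [norm_div, hnc1]
      congr 1
      rw [Complex.norm_real, Real.norm_eq_abs, abs_of_pos htpos]
    rw [this] at hmu1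
    field_simp at hmu1
    linarith
  have hsqrta : Real.sqrt t = a := by
    rw [hta, Real.sqrt_sq ha0.le]
  have hmulam : c 1 / (t : ℂ) = lam := by
    rw [hc1, hta]
    push_cast
    exact mul_div_cancel_left₀ lam (pow_ne_zero 2 (by exact_mod_cast ha0.ne'))
  refine ⟨by rwa [hsqrta] at hnorm, by rwa [hmulam] at hratio, ?_⟩
  -- the induction for c ℓ
  intro ℓ hℓ
  induction ℓ with
  | zero => omega
  | succ k ih =>
    rcases Nat.eq_or_lt_of_le hℓ with h1 | h1
    · rw [← h1]
      simpa using hc1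
    · have hk : 1 ≤ k := by omega
      have hck := ih hk
      -- identity: α n conj(α (n-1)) * (α (n-1) conj(α (n-1-k))) = normSq(α (n-1)) * (α n conj(α (n-(k+1))))
      have hs1 : Tendsto (fun n : ℕ => α n * (starRingEnd ℂ) (α (n - 1))) atTop (nhds (c 1)) :=
        hc 1 le_rfl
      have hs2 : Tendsto (fun n : ℕ => α (n - 1) * (starRingEnd ℂ) (α (n - 1 - k))) atTop
          (nhds (c k)) :=
        (hc k hk).comp (tendsto_sub_atTop_nat 1)
      have hs3 : Tendsto (fun n : ℕ => ((Complex.normSq (α (n - 1)) : ℂ))) atTop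
          (nhds ((t : ℂ))) := by
        have h' : Tendsto (fun n : ℕ => ((Complex.normSq (α n) : ℂ))) atTop (nhds ((t:ℂ))) := by
          rw [htC]; exact hnsC
        exact h'.comp (tendsto_sub_atTop_nat 1)
      have hL : Tendsto (fun n : ℕ => (α n * (starRingEnd ℂ) (α (n - 1))) *
          (α (n - 1) * (starRingEnd ℂ) (α (n - 1 - k)))) atTop (nhds (c 1 * c k)) :=
        hs1.mul hs2
      have hR : Tendsto (fun n : ℕ => ((Complex.normSq (α (n - 1)) : ℂ)) *
          (α n * (starRingEnd ℂ) (α (n - (k + 1))))) atTop (nhds ((t : ℂ) * c (k + 1))) :=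
        hs3.mul (hc (k + 1) (by omega))
      have heqf : (fun n : ℕ => (α n * (starRingEnd ℂ) (α (n - 1))) *
          (α (n - 1) * (starRingEnd ℂ) (α (n - 1 - k))))
          =ᶠ[atTop] fun n : ℕ => ((Complex.normSq (α (n - 1)) : ℂ)) *
          (α n * (starRingEnd ℂ) (α (n - (k + 1)))) := by
        filter_upwards with n
        have hidx : n - 1 - k = n - (k + 1) := by omega
        rw [hidx]
        have : α (n - 1) * (starRingEnd ℂ) (α (n - 1)) = (Complex.normSq (α (n - 1)) : ℂ) :=
          Complex.mul_conj _
        rw [← this]; ring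
      have hkey : c 1 * c k = (t : ℂ) * c (k + 1) :=
        tendsto_nhds_unique (hL.congr' heqf) hR
      have ha2ne : ((a : ℂ) ^ 2) ≠ 0 := pow_ne_zero 2 (by exact_mod_cast ne_of_gt ha0)
      rw [hc1, hck, hta] at hkey
      push_cast at hkey
      have hkey2 : ((a : ℂ) ^ 2) * ((a : ℂ) ^ 2 * lam ^ (k + 1)) =
          ((a : ℂ) ^ 2) * c (k + 1) := by
        rw [← hkey]; ring
      exact (mul_left_cancel₀ ha2ne hkey2).symm
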